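/- Let ω > 0, u₀ > 0, u₁ ∈ ℝ, set V(t) = u₁ t + u₀, and let J be the interval of times t with V(t) > 0. For every differentiable solution (x, p) : J → ℝ² of x'(t) = p(t), p'(t) = −(ω²/V(t)⁴) x(t), the function I₁(t) = (ω x(t)/V(t))² + (V(t) p(t) − u₁ x(t))² is constant on J. -/

import Mathlib

/-- For `ω > 0`, `u₀ > 0`, `V(t) = u₁t + u₀` and `J = {t | V(t) > 0}`,
along every solution of `x' = p`, `p' = −(ω²/V⁴)x` on `J` the function
`I₁(t) = (ωx/V)² + (Vp − u₁x)²` is constant on `J`. -/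
theorem first_integral_I1_inverse_quartic
    (ω u₀ u₁ : ℝ) (hω : 0 < ω) (hu₀ : 0 < u₀)
    (V : ℝ → ℝ) (hV : ∀ t, V t = u₁ * t + u₀)
    (J : Set ℝ) (hJ : J = {t : ℝ | 0 < V t})
    (x p : ℝ → ℝ)
    (hx : ∀ t ∈ J, HasDerivAt x (p t) t)
    (hp : ∀ t ∈ J, HasDerivAt p (-(ω ^ 2 / (V t) ^ 4) * x t) t) :
    ∀ t ∈ J, ∀ s ∈ J,
      (ω * x t / V t) ^ 2 + (V t * p t - u₁ * x t) ^ 2 =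
        (ω * x s / V s) ^ 2 + (V s * p s - u₁ * x s) ^ 2 := by
  have hVfun : V = fun t => u₁ * t + u₀ := funext hV
  subst hJ
  set f : ℝ → ℝ := fun t => (ω * x t / V t) ^ 2 + (V t * p t - u₁ * x t) ^ 2 with hf
  have hVd : ∀ t : ℝ, HasDerivAt V u₁ t := by
    intro t
    rw [hVfun]
    simpa using ((hasDerivAt_id t).const_mul u₁).add_const u₀
  have hconv : Convex ℝ {t : ℝ | 0 < V t} := by
    intro a ha b hb α β hα hβ hab
    simp only [Set.mem_setOf_eq, hV] at ha hb ⊢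
    simp only [smul_eq_mul]
    rcases eq_or_lt_of_le hα with h|h
    · have hβ1 : β = 1 := by linarith
      rw [← h, hβ1]
      simpa using hb
    · nlinarith [mul_pos h ha, mul_nonneg hβ hb.le]
  have hopen : IsOpen {t : ℝ | 0 < V t} := by
    have : Continuous V := by rw [hVfun]; continuity
    exact isOpen_lt continuous_const this
  have key : ∀ r ∈ {t : ℝ | 0 < V t}, HasDerivAt f 0 r := by
    intro r hr
    have hVr : V r ≠ 0 := ne_of_gt hr
    have h1 := (((hx r hr).const_mul ω).div (hVd r) hVr).pow 2
    have h2 := (((hVd r).mul (hp r hr)).sub ((hx r hr).const_mul u₁)).pow 2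
    have h3 := h1.add h2
    convert h3 using 1
    · rfl
    · rfl
    · rfl
    simp only [Pi.div_apply, Pi.sub_apply, Pi.mul_apply]
    norm_num
    field_simp
    ring
  intro t ht s hs
  have hdiff : DifferentiableOn ℝ f {t : ℝ | 0 < V t} :=
    fun r hr => ((key r hr).differentiableAt).differentiableWithinAt
  have hfd : ∀ r ∈ {t : ℝ | 0 < V t}, fderivWithin ℝ f {t : ℝ | 0 < V t} r = 0 := by
    intro r hr
    rw [fderivWithin_of_isOpen hopen hr, (key r hr).hasFDerivAt.fderiv]
    ext v
    simp
  exact hconv.is_const_of_fderivWithin_eq_zero hdiff hfd ht hs
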